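/- Let X_1, X_2, … be i.i.d. real random variables whose common logarithmic moment generating function Λ(t) = log E[exp(t X_1)] is finite for all t ∈ ℝ, and let I(x) = sup_{t ∈ ℝ} (t x − Λ(t)) be the Cramér rate function. Then for every n ≥ 1 and every x ≥ E[X_1], P(X_1 + ⋯ + X_n ≥ n x) ≤ exp(−n I(x)). -/

import Mathlib

open MeasureTheory ProbabilityTheory
open scoped ENNReal

/-- The Cramér rate function `I(x) = ⨆ t, (t x - Λ(t))`, as a function `ℝ → [0, ∞] ⊆ EReal`,
where `Λ = cgf X μ` is the logarithmic moment generating function `t ↦ log E[exp (t X)]`. -/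
noncomputable def cramerRate {Ω : Type*} [MeasurableSpace Ω] (X : Ω → ℝ) (μ : Measure Ω)
    (x : ℝ) : EReal :=
  ⨆ t : ℝ, ((t * x - cgf X μ t : ℝ) : EReal)

/-- Chernoff bound: if `X 0, X 1, …` are i.i.d. real random variables whose common logarithmic
moment generating function is finite everywhere, then for every `n ≥ 1` and `x ≥ E[X 0]`,
`P(X 0 + ⋯ + X (n-1) ≥ n x) ≤ exp (- n I x)`, where `I` is the Cramér rate function. -/
theorem measure_sum_ge_le_exp_neg_rate {Ω : Type*} [MeasurableSpace Ω]
    (μ : Measure Ω) [IsProbabilityMeasure μ] (X : ℕ → Ω → ℝ)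
    (hmeas : ∀ i, Measurable (X i))
    (hindep : iIndepFun X μ)
    (hident : ∀ i, IdentDistrib (X i) (X 0) μ μ)
    (hfin : ∀ t : ℝ, Integrable (fun ω => Real.exp (t * X 0 ω)) μ)
    (n : ℕ) (hn : 1 ≤ n) (x : ℝ) (hx : μ[X 0] ≤ x) :
    μ {ω | (n : ℝ) * x ≤ ∑ i ∈ Finset.range n, X i ω} ≤
      EReal.exp (-(((n : ℝ) : EReal) * cramerRate (X 0) μ x)) := by
  set Λ : ℝ → ℝ := cgf (X 0) μ with hΛdef
  set A : Set Ω := {ω | (n : ℝ) * x ≤ ∑ i ∈ Finset.range n, X i ω} with hA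
  -- integrability of `X 0`
  have habs : ∀ a : ℝ, |a| ≤ Real.exp (1 * a) + Real.exp ((-1) * a) := by
    intro a
    rw [one_mul, neg_one_mul]
    rcases abs_cases a with ⟨h, _⟩ | ⟨h, _⟩ <;>
      nlinarith [Real.add_one_le_exp a, Real.add_one_le_exp (-a), Real.exp_pos a,
        Real.exp_pos (-a)]
  have hintX : Integrable (X 0) μ := by
    refine ((hfin 1).add (hfin (-1))).mono (hmeas 0).aestronglyMeasurable ?_
    filter_upwards with ω
    have hpos : (0:ℝ) < Real.exp (1 * X 0 ω) + Real.exp ((-1) * X 0 ω) := by positivity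
    calc ‖X 0 ω‖ = |X 0 ω| := Real.norm_eq_abs _
      _ ≤ Real.exp (1 * X 0 ω) + Real.exp ((-1) * X 0 ω) := habs _
      _ ≤ ‖((fun ω => Real.exp (1 * X 0 ω)) + fun ω => Real.exp ((-1) * X 0 ω)) ω‖ := by
          simp only [Pi.add_apply, Real.norm_eq_abs]
          rw [abs_of_pos hpos]
  -- Jensen's inequality: `t * E[X 0] ≤ Λ t`
  have hjensen : ∀ t : ℝ, t * μ[X 0] ≤ Λ t := by
    intro t
    have hgf : Integrable (Real.exp ∘ fun ω => t * X 0 ω) μ := hfin t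
    have h := convexOn_exp.map_integral_le (f := fun ω => t * X 0 ω)
      Real.continuous_exp.continuousOn isClosed_univ
      (Filter.Eventually.of_forall fun ω => Set.mem_univ _) (hintX.const_mul t) hgf
    rw [integral_const_mul] at h
    have hpos : 0 < mgf (X 0) μ t := mgf_pos (hfin t)
    have : Real.exp (t * μ[X 0]) ≤ mgf (X 0) μ t := h
    calc t * μ[X 0] = Real.log (Real.exp (t * μ[X 0])) := (Real.log_exp _).symm
      _ ≤ Real.log (mgf (X 0) μ t) := Real.log_le_log (Real.exp_pos _) this
      _ = Λ t := rfl
  -- the per-`t` Chernoff bound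
  have key : ∀ t : ℝ,
      μ A ≤ ENNReal.ofReal (Real.exp (-((n : ℝ) * (t * x - Λ t)))) := by
    intro t
    rcases le_or_gt 0 t with ht | ht
    · -- t ≥ 0 : genuine Chernoff bound
      have hint : ∀ i, Integrable (fun ω => Real.exp (t * X i ω)) μ := by
        intro i
        have := ((hident i).comp (u := fun y => Real.exp (t * y))
          (Real.measurable_exp.comp (measurable_const_mul t)))
        exact this.integrable_iff.mpr (hfin t)
      have hintsum : Integrable (fun ω => Real.exp (t * (∑ i ∈ Finset.range n, X i) ω)) μ :=
        hindep.integrable_exp_mul_sum hmeas fun i _ => hint i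
      have hcgf : cgf (∑ i ∈ Finset.range n, X i) μ t = (n : ℝ) * Λ t := by
        rw [hindep.cgf_sum hmeas fun i _ => hint i]
        have hall : ∀ i, cgf (X i) μ t = Λ t := by
          intro i
          have := ((hident i).comp (u := fun y => Real.exp (t * y))
            (Real.measurable_exp.comp (measurable_const_mul t))).integral_eq
          simp only [cgf, mgf, Function.comp] at *
          rw [this]
          rfl
        rw [Finset.sum_congr rfl fun i _ => hall i]
        simp [mul_comm]
      have hch := measure_ge_le_exp_cgf (X := ∑ i ∈ Finset.range n, X i) (μ := μ)
        ((n : ℝ) * x) ht hintsum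
      rw [hcgf] at hch
      have hsets : {ω | (n : ℝ) * x ≤ (∑ i ∈ Finset.range n, X i) ω} = A := by
        ext ω; simp [hA]
      rw [hsets] at hch
      have hexp : Real.exp (-t * ((n : ℝ) * x) + (n : ℝ) * Λ t)
          = Real.exp (-((n : ℝ) * (t * x - Λ t))) := by ring_nf
      rw [hexp] at hch
      calc μ A = ENNReal.ofReal (μ A).toReal := (ENNReal.ofReal_toReal (measure_ne_top μ A)).symm
        _ ≤ ENNReal.ofReal (Real.exp (-((n : ℝ) * (t * x - Λ t)))) :=
          ENNReal.ofReal_le_ofReal hch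
    · -- t < 0 : the exponent is nonpositive, so bound by 1
      have h1 : t * x ≤ t * μ[X 0] := mul_le_mul_of_nonpos_left hx ht.le
      have h2 : t * x - Λ t ≤ 0 := by linarith [hjensen t]
      have h3 : (0 : ℝ) ≤ -((n : ℝ) * (t * x - Λ t)) := by
        have : (0:ℝ) ≤ (n : ℝ) := Nat.cast_nonneg n
        nlinarith
      calc μ A ≤ 1 := prob_le_one
        _ = ENNReal.ofReal (Real.exp 0) := by simp
        _ ≤ ENNReal.ofReal (Real.exp (-((n : ℝ) * (t * x - Λ t)))) :=
          ENNReal.ofReal_le_ofReal (Real.exp_le_exp.mpr h3)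
  -- assemble the bounds via the order isomorphism `log`/`exp`
  rw [← ENNReal.exp_log (μ A), EReal.exp_le_exp_iff]
  refine EReal.le_neg_of_le_neg ?_
  rw [EReal.mul_comm]
  have hn0 : (0 : EReal) < ((n : ℝ) : EReal) := by
    exact_mod_cast (by positivity : (0:ℝ) < (n : ℝ))
  have hnt : ((n : ℝ) : EReal) ≠ ⊤ := EReal.coe_ne_top _
  rw [← EReal.le_div_iff_mul_le hn0 hnt]
  refine iSup_le fun t => ?_
  rw [EReal.le_div_iff_mul_le hn0 hnt]
  refine EReal.le_neg_of_le_neg ?_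
  have hkey := ENNReal.log_monotone (key t)
  have hlog : ENNReal.log (ENNReal.ofReal (Real.exp (-((n : ℝ) * (t * x - Λ t)))))
      = ((-((n : ℝ) * (t * x - Λ t)) : ℝ) : EReal) := by
    rw [← EReal.exp_coe, EReal.log_exp]
  rw [hlog] at hkey
  refine hkey.trans (le_of_eq ?_)
  rw [← EReal.coe_mul, ← EReal.coe_neg, EReal.coe_eq_coe_iff]
  ring
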